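/- Let G be a graph on n vertices, M a positive semidefinite real symmetric matrix indexed by V(G) with (M)_{ij} x_i x_j ≤ 0 for nonadjacent distinct i, j, and x ∈ R(M) totally nonzero. Then the independence number satisfies α(G) ≤ (xᵀ M# x) · max_{u∈V(G)} (M)_{uu}/x_u². -/

import Mathlib

open Matrix Finset

/-- The independence number of a finite simple graph. -/
noncomputable def indepNum {V : Type*} [Fintype V] (G : SimpleGraph V) : ℕ :=
  sSup {k | ∃ S : Finset V, (∀ u ∈ S, ∀ v ∈ S, u ≠ v → ¬ G.Adj u v) ∧ S.card = k}

lemma symm_dot' {n : ℕ} (M : Matrix (Fin n) (Fin n) ℝ) (hM : M.PosSemidef) (a b : Fin n → ℝ) :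
    a ⬝ᵥ M.mulVec b = M.mulVec a ⬝ᵥ b := by
  have hsymm : Mᵀ = M := by have := hM.isHermitian.eq; simpa using this
  rw [dotProduct_mulVec]
  conv_lhs => rw [← hsymm, vecMul_transpose]

open scoped MatrixOrder in
lemma cs' {n : ℕ} (M : Matrix (Fin n) (Fin n) ℝ) (hM : M.PosSemidef) (a b : Fin n → ℝ) :
    (a ⬝ᵥ M.mulVec b)^2 ≤ (a ⬝ᵥ M.mulVec a) * (b ⬝ᵥ M.mulVec b) := by
  have hs := (CFC.sqrt_nonneg M).posSemidef
  have hmul : CFC.sqrt M * CFC.sqrt M = M := CFC.sqrt_mul_sqrt_self M hM.nonneg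
  set S := CFC.sqrt M with hS
  have key : ∀ u v : Fin n → ℝ, u ⬝ᵥ M.mulVec v = (S.mulVec u) ⬝ᵥ (S.mulVec v) := by
    intro u v
    rw [← hmul, ← mulVec_mulVec, symm_dot' S hs]
  rw [key, key, key]
  have := Finset.sum_mul_sq_le_sq_mul_sq Finset.univ (S.mulVec a) (S.mulVec b)
  simpa [dotProduct, pow_two, mul_comm] using this


/-- Theorem 3.1(2), inequality: for (M,x) ∈ 𝒫(G),
α(G) ≤ (xᵀ M# x) · max_u M_{uu}/x_u², where X is the group inverse of M. -/
theorem stmt4 (n : ℕ) (G : SimpleGraph (Fin n)) (M : Matrix (Fin n) (Fin n) ℝ)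
    (hM : M.PosSemidef) (x : Fin n → ℝ)
    (hxR : ∃ y : Fin n → ℝ, M.mulVec y = x) (hx : ∀ u, x u ≠ 0)
    (hnonadj : ∀ i j, i ≠ j → ¬ G.Adj i j → M i j * x i * x j ≤ 0)
    (X : Matrix (Fin n) (Fin n) ℝ)
    (h1 : M * X * M = M) (h2 : X * M * X = X) (h3 : M * X = X * M) :
    (indepNum G : ℝ) ≤ (x ⬝ᵥ X.mulVec x) * ⨆ u : Fin n, M u u / (x u) ^ 2 := by
  obtain ⟨y, hy⟩ := hxR
  set c := ⨆ u : Fin n, M u u / (x u) ^ 2 with hc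
  have hbdd : BddAbove (Set.range fun u : Fin n => M u u / (x u) ^ 2) :=
    (Set.finite_range _).bddAbove
  have hdiag : ∀ u, 0 ≤ M u u / (x u) ^ 2 := by
    intro u
    have h0 : (0:ℝ) ≤ M u u := by
      have := hM.dotProduct_mulVec_nonneg (Pi.single u 1)
      simpa [dotProduct, mulVec, Pi.single_apply, Finset.sum_ite_eq'] using this
    positivity
  have hdle : ∀ u, M u u / (x u) ^ 2 ≤ c := fun u => le_ciSup hbdd u
  have hc0 : 0 ≤ c := by
    rcases Nat.eq_zero_or_pos n with h | h
    · subst h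
      have : IsEmpty (Fin 0) := by infer_instance
      rw [hc, Real.iSup_of_isEmpty]
    · exact le_trans (hdiag ⟨0, h⟩) (hdle ⟨0, h⟩)
  have hXx : x ⬝ᵥ X.mulVec x = y ⬝ᵥ M.mulVec y := by
    rw [← hy, ← symm_dot' M hM y, mulVec_mulVec, mulVec_mulVec, h1]
  have hyMy : 0 ≤ y ⬝ᵥ M.mulVec y := by
    have := hM.dotProduct_mulVec_nonneg y; simpa using this
  have hRHS : 0 ≤ (x ⬝ᵥ X.mulVec x) * c := mul_nonneg (hXx ▸ hyMy) hc0
  -- obtain an independent set attaining the sup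
  have hA : (indepNum G) ∈ {k | ∃ S : Finset (Fin n),
      (∀ u ∈ S, ∀ v ∈ S, u ≠ v → ¬ G.Adj u v) ∧ S.card = k} := by
    apply Nat.sSup_mem
    · exact ⟨0, ∅, by simp⟩
    · exact ⟨n, fun k ⟨S, _, hSk⟩ => hSk ▸ (by simpa using S.card_le_univ)⟩
  obtain ⟨S, hS, hcard⟩ := hA
  rw [← hcard]
  -- the test vector
  set z : Fin n → ℝ := fun u => if u ∈ S then (x u)⁻¹ else 0 with hz
  have hzx : z ⬝ᵥ x = S.card := by
    have h1' : ∀ u, z u * x u = if u ∈ S then 1 else 0 := by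
      intro u; by_cases h : u ∈ S <;> simp [hz, h, inv_mul_cancel₀ (hx u)]
    simp [dotProduct, h1']
  have hzMz : z ⬝ᵥ M.mulVec z ≤ S.card * c := by
    have inner_bound : ∀ u, (∑ v, z u * (M u v * z v)) ≤
        (if u ∈ S then M u u / (x u) ^ 2 else 0) := by
      intro u
      by_cases hu : u ∈ S
      · rw [if_pos hu]
        have hterm : ∀ v, z u * (M u v * z v) ≤ if v = u then M u u / (x u) ^ 2 else 0 := by
          intro v
          by_cases hv : v = u
          · subst hv
            rw [if_pos rfl]
            apply le_of_eq
            simp only [hz, if_pos hu]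
            rw [div_eq_mul_inv, pow_two, mul_inv]; ring
          · rw [if_neg hv]
            by_cases hv2 : v ∈ S
            · simp only [hz, if_pos hu, if_pos hv2]
              have hadj : ¬ G.Adj u v := hS u hu v hv2 (fun h => hv h.symm)
              have h0 : M u v * x u * x v ≤ 0 := hnonadj u v (fun h => hv h.symm) hadj
              have heq : (x u)⁻¹ * (M u v * (x v)⁻¹) =
                  (M u v * x u * x v) * ((x u)^2 * (x v)^2)⁻¹ := by
                have e1 := mul_inv_cancel₀ (hx u)
                have e2 := mul_inv_cancel₀ (hx v)
                rw [mul_inv, pow_two, pow_two, mul_inv, mul_inv]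
                linear_combination (-(M u v * (x u)⁻¹ * (x v)⁻¹)) * e1 +
                  (-(M u v * x u * (x u)⁻¹ * (x u)⁻¹ * (x v)⁻¹)) * e2
              rw [heq]
              exact mul_nonpos_of_nonpos_of_nonneg h0 (by positivity)
            · simp [hz, if_neg hv2]
        calc (∑ v, z u * (M u v * z v)) ≤ ∑ v, (if v = u then M u u / (x u) ^ 2 else 0) :=
              Finset.sum_le_sum (fun v _ => hterm v)
          _ = M u u / (x u) ^ 2 := by simp
      · rw [if_neg hu]
        apply le_of_eq
        simp [hz, if_neg hu]
    calc z ⬝ᵥ M.mulVec z = ∑ u, ∑ v, z u * (M u v * z v) := by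
          simp [dotProduct, mulVec, Finset.mul_sum]
      _ ≤ ∑ u, (if u ∈ S then M u u / (x u) ^ 2 else 0) :=
          Finset.sum_le_sum (fun u _ => inner_bound u)
      _ = ∑ u ∈ S, M u u / (x u) ^ 2 := by
          rw [Finset.sum_ite_mem]; congr 1; simp
      _ ≤ ∑ u ∈ S, c := Finset.sum_le_sum (fun u _ => hdle u)
      _ = S.card * c := by simp [mul_comm]
  have hzMz0 : 0 ≤ z ⬝ᵥ M.mulVec z := by have := hM.dotProduct_mulVec_nonneg z; simpa using this
  have key : ((S.card : ℝ))^2 ≤ (S.card * c) * (y ⬝ᵥ M.mulVec y) := by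
    calc ((S.card : ℝ))^2 = (z ⬝ᵥ M.mulVec y)^2 := by rw [hy, hzx]
      _ ≤ (z ⬝ᵥ M.mulVec z) * (y ⬝ᵥ M.mulVec y) := cs' M hM z y
      _ ≤ (S.card * c) * (y ⬝ᵥ M.mulVec y) :=
          mul_le_mul_of_nonneg_right hzMz hyMy
  rcases Nat.eq_zero_or_pos S.card with h0 | h0
  · rw [h0]; exact_mod_cast hRHS
  · have hpos : (0:ℝ) < S.card := by exact_mod_cast h0
    rw [hXx]
    nlinarith [key, hpos, hyMy, hc0]
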